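/- In the FT Spanning Star protocol without faults, the following invariant holds in every reachable configuration: every connected component of the active-edge graph with at least one edge contains at least one node in state b, and every isolated node (degree 0) is in state b. -/

import Mathlib

/-- Configurations of the FT Spanning Star protocol (fault-free setting): the
set of nodes in state `r` (the others are in state `b`) and the active edges. -/
structure StarConf (V : Type*) where
  red : Finset V
  edges : Finset (Sym2 V)

/-- The transitions of FT Spanning Star:
`(b,b,0)→(b,r,1)`, `(b,b,1)→(b,r,1)`, `(r,r,1)→(b,b,0)`, `(b,r,0)→(b,r,1)`. -/
inductive StarStep {V : Type*} [DecidableEq V] : StarConf V → StarConf V → Prop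
  | bb0 (C : StarConf V) (u v : V) (hne : u ≠ v) (hu : u ∉ C.red) (hv : v ∉ C.red)
      (he : s(u, v) ∉ C.edges) :
      StarStep C ⟨insert v C.red, insert s(u, v) C.edges⟩
  | bb1 (C : StarConf V) (u v : V) (hne : u ≠ v) (hu : u ∉ C.red) (hv : v ∉ C.red)
      (he : s(u, v) ∈ C.edges) :
      StarStep C ⟨insert v C.red, C.edges⟩
  | rr1 (C : StarConf V) (u v : V) (hne : u ≠ v) (hu : u ∈ C.red) (hv : v ∈ C.red)
      (he : s(u, v) ∈ C.edges) :
      StarStep C ⟨(C.red.erase u).erase v, C.edges.erase s(u, v)⟩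
  | br0 (C : StarConf V) (u v : V) (hne : u ≠ v) (hu : u ∉ C.red) (hv : v ∈ C.red)
      (he : s(u, v) ∉ C.edges) :
      StarStep C ⟨C.red, insert s(u, v) C.edges⟩

/-- Adjacency in the active-edge graph of a configuration. -/
def StarAdj {V : Type*} (C : StarConf V) (u v : V) : Prop :=
  u ≠ v ∧ s(u, v) ∈ C.edges

/-- Inductive strengthening: every red node has a neighbor and a path to a
blue node. -/
def StarInv {V : Type*} (C : StarConf V) : Prop :=
  ∀ u ∈ C.red, (∃ v, StarAdj C u v) ∧
    ∃ w, Relation.ReflTransGen (StarAdj C) u w ∧ w ∉ C.red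

lemma adj_mono_insert {V : Type*} [DecidableEq V] {C : StarConf V} (R' : Finset V)
    (e : Sym2 V) {x y : V} (h : StarAdj C x y) :
    StarAdj ⟨R', insert e C.edges⟩ x y :=
  ⟨h.1, Finset.mem_insert_of_mem h.2⟩

lemma trunc {V : Type*} [DecidableEq V] (C : StarConf V) (R' : Finset V) (u v : V)
    {x w : V} (h : Relation.ReflTransGen (StarAdj C) x w) :
    ∃ z, Relation.ReflTransGen (StarAdj ⟨R', C.edges.erase s(u, v)⟩) x z ∧
      (z = u ∨ z = v ∨ z = w) := by
  induction h with
  | refl => exact ⟨x, Relation.ReflTransGen.refl, Or.inr (Or.inr rfl)⟩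
  | @tail b c hxb hbc ih =>
    obtain ⟨z, hz, hcase⟩ := ih
    rcases hcase with h1 | h2 | h3
    · exact ⟨z, hz, Or.inl h1⟩
    · exact ⟨z, hz, Or.inr (Or.inl h2)⟩
    · subst h3
      by_cases he : s(z, c) = s(u, v)
      · rcases Sym2.eq_iff.mp he with ⟨hzu, _⟩ | ⟨hzv, _⟩
        · exact ⟨z, hz, Or.inl hzu⟩
        · exact ⟨z, hz, Or.inr (Or.inl hzv)⟩
      · exact ⟨c, hz.tail ⟨hbc.1, Finset.mem_erase.mpr ⟨he, hbc.2⟩⟩,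
          Or.inr (Or.inr rfl)⟩

lemma inv_step {V : Type*} [DecidableEq V] {C C' : StarConf V}
    (h : StarStep C C') (hI : StarInv C) : StarInv C' := by
  cases h with
  | bb0 u v hne hu hv he =>
    intro x hx
    have hvu : StarAdj ⟨insert v C.red, insert s(u, v) C.edges⟩ v u :=
      ⟨hne.symm, by rw [Sym2.eq_swap]; exact Finset.mem_insert_self _ _⟩
    have hunr : u ∉ (insert v C.red : Finset V) := by
      simp [Finset.mem_insert, hne, hu]
    by_cases hxv : x = v
    · subst hxv
      exact ⟨⟨u, hvu⟩, u, Relation.ReflTransGen.single hvu, hunr⟩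
    · have hx' : x ∈ C.red := by
        rcases Finset.mem_insert.mp hx with h | h
        · exact absurd h hxv
        · exact h
      obtain ⟨⟨y, hadj⟩, w, hpath, hw⟩ := hI x hx'
      refine ⟨⟨y, adj_mono_insert _ _ hadj⟩, ?_⟩
      have hpath' : Relation.ReflTransGen
          (StarAdj ⟨insert v C.red, insert s(u, v) C.edges⟩) x w :=
        Relation.ReflTransGen.mono (fun a b hab => adj_mono_insert _ _ hab) _ _ hpath
      by_cases hwv : w = v
      · subst hwv
        exact ⟨u, hpath'.tail hvu, hunr⟩
      · exact ⟨w, hpath', by simp [Finset.mem_insert, hwv, hw]⟩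
  | bb1 u v hne hu hv he =>
    intro x hx
    have hvu : StarAdj ⟨insert v C.red, C.edges⟩ v u :=
      ⟨hne.symm, by rw [Sym2.eq_swap]; exact he⟩
    have hunr : u ∉ (insert v C.red : Finset V) := by
      simp [Finset.mem_insert, hne, hu]
    by_cases hxv : x = v
    · subst hxv
      exact ⟨⟨u, hvu⟩, u, Relation.ReflTransGen.single hvu, hunr⟩
    · have hx' : x ∈ C.red := by
        rcases Finset.mem_insert.mp hx with h | h
        · exact absurd h hxv
        · exact h
      obtain ⟨⟨y, hadj⟩, w, hpath, hw⟩ := hI x hx'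
      refine ⟨⟨y, hadj⟩, ?_⟩
      have hpath' : Relation.ReflTransGen
          (StarAdj ⟨insert v C.red, C.edges⟩) x w := hpath
      by_cases hwv : w = v
      · subst hwv
        exact ⟨u, hpath'.tail hvu, hunr⟩
      · exact ⟨w, hpath', by simp [Finset.mem_insert, hwv, hw]⟩
  | rr1 u v hne hu hv he =>
    intro x hx
    have hxv : x ≠ v := (Finset.mem_erase.mp hx).1
    have hxu : x ≠ u := (Finset.mem_erase.mp (Finset.mem_erase.mp hx).2).1
    have hx' : x ∈ C.red := (Finset.mem_erase.mp (Finset.mem_erase.mp hx).2).2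
    obtain ⟨⟨y, hadj⟩, w, hpath, hw⟩ := hI x hx'
    have hxyne : s(x, y) ≠ s(u, v) := by
      intro hcontra
      rcases Sym2.eq_iff.mp hcontra with ⟨h1, _⟩ | ⟨h1, _⟩
      · exact hxu h1
      · exact hxv h1
    refine ⟨⟨y, hadj.1, Finset.mem_erase.mpr ⟨hxyne, hadj.2⟩⟩, ?_⟩
    obtain ⟨z, hz, hcase⟩ := trunc C ((C.red.erase u).erase v) u v hpath
    refine ⟨z, hz, ?_⟩
    intro hmem
    have hzv : z ≠ v := (Finset.mem_erase.mp hmem).1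
    have hzu : z ≠ u := (Finset.mem_erase.mp (Finset.mem_erase.mp hmem).2).1
    have hzr : z ∈ C.red := (Finset.mem_erase.mp (Finset.mem_erase.mp hmem).2).2
    rcases hcase with h1 | h2 | h3
    · exact hzu h1
    · exact hzv h2
    · exact hw (h3 ▸ hzr)
  | br0 u v hne hu hv he =>
    intro x hx
    obtain ⟨⟨y, hadj⟩, w, hpath, hw⟩ := hI x hx
    exact ⟨⟨y, adj_mono_insert _ _ hadj⟩,
      w, Relation.ReflTransGen.mono (fun a b hab => adj_mono_insert _ _ hab) _ _ hpath, hw⟩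

/-- Invariant of FT Spanning Star without faults: in every reachable
configuration, every isolated node is in state `b`, and every connected
component containing an edge contains at least one node in state `b`. -/
theorem stmt_11 {V : Type*} [DecidableEq V] (C : StarConf V)
    (hreach : Relation.ReflTransGen StarStep ⟨∅, ∅⟩ C) :
    (∀ u : V, (¬ ∃ v, StarAdj C u v) → u ∉ C.red) ∧
    (∀ u : V, (∃ v, StarAdj C u v) →
      ∃ w, Relation.ReflTransGen (StarAdj C) u w ∧ w ∉ C.red) := by
  have hInv : StarInv C := by
    induction hreach with
    | refl => intro u hu; simp at hu
    | tail _ hstep ih => exact inv_step hstep ih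
  constructor
  · intro u hno hu
    exact hno (hInv u hu).1
  · intro u _
    by_cases hu : u ∈ C.red
    · exact (hInv u hu).2
    · exact ⟨u, Relation.ReflTransGen.refl, hu⟩
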